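/- For every integer k ≥ 1, the total domination number of the hypercube of dimension 2^k satisfies γ_t(Q_{2^k}) = 2^{2^k − k}. -/

import Mathlib

open SimpleGraph

/-- The complete graph on two vertices. -/
abbrev K2 : SimpleGraph (Fin 2) := ⊤

/-- `S` is a dominating set of `G`: every vertex not in `S` is adjacent to a vertex of `S`. -/
def IsDominatingSet {V : Type*} (G : SimpleGraph V) (S : Finset V) : Prop :=
  ∀ v : V, v ∉ S → ∃ u ∈ S, G.Adj v u

/-- `S` is a total dominating set of `G`: every vertex is adjacent to a vertex of `S`. -/
def IsTotalDominatingSet {V : Type*} (G : SimpleGraph V) (S : Finset V) : Prop :=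
  ∀ v : V, ∃ u ∈ S, G.Adj v u

/-- The domination number of `G`. -/
noncomputable def dominationNumber {V : Type*} (G : SimpleGraph V) : ℕ :=
  sInf {n : ℕ | ∃ S : Finset V, IsDominatingSet G S ∧ S.card = n}

/-- The total domination number of `G`. -/
noncomputable def totalDominationNumber {V : Type*} (G : SimpleGraph V) : ℕ :=
  sInf {n : ℕ | ∃ S : Finset V, IsTotalDominatingSet G S ∧ S.card = n}

/-- The `n`-dimensional hypercube: vertices are binary strings of length `n`,
two vertices are adjacent iff they differ in exactly one coordinate. -/
def hypercube (n : ℕ) : SimpleGraph (Fin n → Bool) where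
  Adj x y := hammingDist x y = 1
  symm := ⟨fun x y h => by simpa [hammingDist_comm] using h⟩
  loopless := ⟨fun x h => by simp [hammingDist_self] at h⟩

namespace TDAux

instance : Std.Commutative (fun a b : ℕ => a ^^^ b) := ⟨Nat.xor_comm⟩
instance : Std.Associative (fun a b : ℕ => a ^^^ b) := ⟨Nat.xor_assoc⟩

/-- XOR of the indices of the `true` coordinates. -/
def synd {n : ℕ} (x : Fin n → Bool) : ℕ :=
  Finset.fold (fun a b : ℕ => a ^^^ b) 0 (fun i : Fin n => (i : ℕ))
    (Finset.univ.filter fun i => x i = true)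

/-- Flip coordinate `j`. -/
def flip {n : ℕ} (x : Fin n → Bool) (j : Fin n) : Fin n → Bool :=
  fun i => if i = j then !(x i) else x i

lemma flip_flip {n : ℕ} (x : Fin n → Bool) (j : Fin n) : flip (flip x j) j = x := by
  funext i
  simp only [flip]
  by_cases h : i = j <;> simp [h]

lemma hammingDist_flip {n : ℕ} (x : Fin n → Bool) (j : Fin n) :
    hammingDist x (flip x j) = 1 := by
  have : (Finset.univ.filter fun i => x i ≠ flip x j i) = {j} := by
    ext i
    by_cases h : i = j <;> simp [flip, h]
  rw [hammingDist, this, Finset.card_singleton]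

lemma synd_flip {n : ℕ} (x : Fin n → Bool) (j : Fin n) :
    synd (flip x j) = (j : ℕ) ^^^ synd x := by
  classical
  set s := Finset.univ.filter (fun i => x i = true) with hs
  by_cases hj : x j = true
  · have h1 : (Finset.univ.filter fun i => flip x j i = true) = s.erase j := by
      ext i
      by_cases h : i = j <;> simp [flip, h, hs, hj]
    have hjs : j ∈ s := by simp [hs, hj]
    have h2 : s = insert j (s.erase j) := (Finset.insert_erase hjs).symm
    have hjns : j ∉ s.erase j := Finset.notMem_erase _ _
    have key : synd x = (j : ℕ) ^^^
        Finset.fold (fun a b : ℕ => a ^^^ b) 0 (fun i : Fin n => (i : ℕ)) (s.erase j) := by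
      rw [synd, ← hs]
      conv_lhs => rw [h2]
      simp [Finset.fold_insert hjns]
    rw [synd, h1, key, ← Nat.xor_assoc, Nat.xor_self, Nat.zero_xor]
  · have h1 : (Finset.univ.filter fun i => flip x j i = true) = insert j s := by
      ext i
      by_cases h : i = j <;> simp [flip, h, hs, hj]
    have hjns : j ∉ s := by simp [hs, hj]
    rw [synd, h1]
    simp [Finset.fold_insert hjns, synd, ← hs]

lemma synd_lt {k : ℕ} (x : Fin (2 ^ k) → Bool) : synd x < 2 ^ k := by
  rw [synd]
  generalize (Finset.univ.filter fun i => x i = true) = s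
  induction s using Finset.induction with
  | empty => simpa using pow_pos (by norm_num) k
  | insert _ _ hns ih =>
    rw [Finset.fold_insert hns]
    exact Nat.xor_lt_two_pow (Fin.is_lt _) ih

end TDAux

/-- For every `k ≥ 1`, `γ_t(Q_{2^k}) = 2^(2^k - k)`. -/
theorem totalDomination_hypercube_pow (k : ℕ) (hk : 1 ≤ k) :
    totalDominationNumber (hypercube (2 ^ k)) = 2 ^ (2 ^ k - k) := by
  classical
  set n := 2 ^ k with hn
  have hkn : k ≤ n := (Nat.lt_two_pow_self (n := k)).le
  have hnpos : 0 < n := pow_pos (by norm_num) k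
  have hsplit : 2 ^ (n - k) * 2 ^ k = 2 ^ n := by
    rw [← pow_add, Nat.sub_add_cancel hkn]
  have hcardV : Fintype.card (Fin n → Bool) = 2 ^ n := by simp
  -- the code
  set S : Finset (Fin n → Bool) := Finset.univ.filter (fun x => TDAux.synd x = 0) with hS
  -- S is totally dominating
  have hTD : IsTotalDominatingSet (hypercube n) S := by
    intro v
    refine ⟨TDAux.flip v ⟨TDAux.synd v, TDAux.synd_lt v⟩, ?_, ?_⟩
    · simp only [hS, Finset.mem_filter, Finset.mem_univ, true_and]
      rw [TDAux.synd_flip]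
      exact Nat.xor_self _
    · exact TDAux.hammingDist_flip v _
  -- card of S
  have hfib : ∀ t : Fin n,
      (Finset.univ.filter fun x : Fin n → Bool => TDAux.synd x = (t : ℕ)).card = S.card := by
    intro t
    refine Finset.card_bij' (fun x _ => TDAux.flip x t) (fun y _ => TDAux.flip y t) ?_ ?_ ?_ ?_
    · intro x hx
      simp only [Finset.mem_filter, Finset.mem_univ, true_and] at hx ⊢
      rw [hS]
      simp only [Finset.mem_filter, Finset.mem_univ, true_and]
      rw [TDAux.synd_flip, hx, Nat.xor_self]
    · intro y hy
      rw [hS] at hy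
      simp only [Finset.mem_filter, Finset.mem_univ, true_and] at hy ⊢
      rw [TDAux.synd_flip, hy, Nat.xor_zero]
    · intro x _; exact TDAux.flip_flip x t
    · intro y _; exact TDAux.flip_flip y t
  have hsum : (Finset.univ : Finset (Fin n → Bool)).card
      = ∑ t : Fin n, (Finset.univ.filter
          fun x : Fin n → Bool => TDAux.synd x = (t : ℕ)).card := by
    rw [Finset.card_eq_sum_card_fiberwise
      (f := fun x : Fin n → Bool => (⟨TDAux.synd x, TDAux.synd_lt x⟩ : Fin n))
      (t := Finset.univ) (fun x _ => Finset.mem_univ _)]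
    refine Finset.sum_congr rfl fun t _ => ?_
    congr 1
    ext x
    simp [Fin.ext_iff]
  have hcardS : S.card = 2 ^ (n - k) := by
    have h1 : 2 ^ n = n * S.card := by
      rw [← hcardV, ← Finset.card_univ, hsum]
      simp [hfib]
    have h2 : 2 ^ (n - k) * 2 ^ k = S.card * 2 ^ k := by
      rw [hsplit, h1]
      exact Nat.mul_comm n S.card
    exact (Nat.eq_of_mul_eq_mul_right (pow_pos (by norm_num) k) h2).symm
  -- lower bound
  have hlow : ∀ T : Finset (Fin n → Bool), IsTotalDominatingSet (hypercube n) T →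
      2 ^ (n - k) ≤ T.card := by
    intro T hT
    have hf : ∀ v : Fin n → Bool, ∃ u, u ∈ T ∧ (hypercube n).Adj v u := by
      intro v; obtain ⟨u, hu, ha⟩ := hT v; exact ⟨u, hu, ha⟩
    choose f hfT hfAdj using hf
    have hsum2 : (Finset.univ : Finset (Fin n → Bool)).card
        = ∑ u ∈ T, (Finset.univ.filter fun v => f v = u).card :=
      Finset.card_eq_sum_card_fiberwise (fun v _ => hfT v)
    have hbound : ∀ u ∈ T, (Finset.univ.filter fun v => f v = u).card ≤ n := by
      intro u _
      have key : ∀ v ∈ (Finset.univ.filter fun v => f v = u),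
          ∃ i : Fin n, (Finset.univ.filter fun m => v m ≠ u m) = {i} := by
        intro v hv
        simp only [Finset.mem_filter, Finset.mem_univ, true_and] at hv
        have : hammingDist v u = 1 := hv ▸ hfAdj v
        exact Finset.card_eq_one.mp this
      choose g hg using key
      calc (Finset.univ.filter fun v => f v = u).card
          ≤ (Finset.univ : Finset (Fin n)).card := by
            apply Finset.card_le_card_of_injOn (fun v => if h : _ then g v h else 0)
            · intro v _; exact Finset.mem_univ _
            · intro v1 h1 v2 h2 hgv
              simp only [Finset.mem_coe] at h1 h2
              simp only at hgv
              rw [dif_pos h1, dif_pos h2] at hgv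
              have e1 := hg v1 h1
              have e2 := hg v2 h2
              funext m
              have d1 : v1 m ≠ u m ↔ m = g v1 h1 := by
                constructor
                · intro hm
                  have : m ∈ ({g v1 h1} : Finset (Fin n)) := e1 ▸ (by simpa using hm)
                  simpa using this
                · intro hm
                  have : m ∈ (Finset.univ.filter fun m => v1 m ≠ u m) := by
                    rw [e1]; simpa using hm
                  simpa using this
              have d2 : v2 m ≠ u m ↔ m = g v2 h2 := by
                constructor
                · intro hm
                  have : m ∈ ({g v2 h2} : Finset (Fin n)) := e2 ▸ (by simpa using hm)
                  simpa using this
                · intro hm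
                  have : m ∈ (Finset.univ.filter fun m => v2 m ≠ u m) := by
                    rw [e2]; simpa using hm
                  simpa using this
              by_cases hm : m = g v1 h1
              · have n1 : v1 m ≠ u m := d1.mpr hm
                have n2 : v2 m ≠ u m := d2.mpr (hgv ▸ hm)
                cases hum : u m <;> cases h1m : v1 m <;> cases h2m : v2 m <;>
                  simp_all
              · have n1 : v1 m = u m := by
                  by_contra hc; exact hm (d1.mp hc)
                have n2 : v2 m = u m := by
                  by_contra hc; exact hm (hgv ▸ d2.mp hc)
                rw [n1, n2]
        _ = n := by simp
    have h3 : 2 ^ n ≤ T.card * n := by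
      calc 2 ^ n = (Finset.univ : Finset (Fin n → Bool)).card := by
            rw [Finset.card_univ, hcardV]
        _ = ∑ u ∈ T, (Finset.univ.filter fun v => f v = u).card := hsum2
        _ ≤ ∑ _u ∈ T, n := Finset.sum_le_sum hbound
        _ = T.card * n := by rw [Finset.sum_const, smul_eq_mul]
    have h4 : 2 ^ (n - k) * 2 ^ k ≤ T.card * 2 ^ k := by
      rw [hsplit]; exact h3
    exact Nat.le_of_mul_le_mul_right h4 (pow_pos (by norm_num) k)
  -- conclude
  refine le_antisymm ?_ ?_
  · exact Nat.sInf_le ⟨S, hTD, hcardS⟩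
  · refine le_csInf ⟨2 ^ (n - k), S, hTD, hcardS⟩ ?_
    rintro m ⟨T, hT, rfl⟩
    exact hlow T hT
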